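/- Let g : ℝ → ℝ be C¹ on a half-line with g' tending monotonically to 0 and x·|g'(x)| → ∞ (a Fejér function), and suppose g is eventually positive and increasing to infinity. Define φ(n) = #{m ∈ ℕ : ⌊g(m)⌋ = n} and Φ(n) = ∑_{k=0}^n φ(k). Then lim_{n→∞} φ(n) = ∞ and lim_{n→∞} φ(n)/Φ(n) = 0. -/

import Mathlib

open Filter Set

set_option maxHeartbeats 1000000 in
/-- (Bergelson–Håland Knutson, Lemmas 2.4 and 2.5) Let `g` be a Fejér function (C¹ on a
half-line, `g'` tending monotonically to `0`, `x |g'(x)| → ∞`) with `g → ∞` and `g`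
eventually strictly increasing. With `φ(n) = #{m ∈ ℕ : ⌊g(m)⌋ = n}` and
`Φ(n) = ∑_{k=0}^n φ(k)`, one has `φ(n) → ∞` and `φ(n)/Φ(n) → 0`. -/
theorem stmt13 (g : ℝ → ℝ) (x₀ : ℝ) (hx₀ : 0 ≤ x₀)
    (hg : ContDiffOn ℝ 1 g (Ici x₀))
    (hanti : AntitoneOn (deriv g) (Ici x₀))
    (h0 : Tendsto (deriv g) atTop (nhds 0))
    (hinf : Tendsto (fun x => x * |deriv g x|) atTop atTop)
    (hgi : Tendsto g atTop atTop)
    (hsm : ∃ x₁, StrictMonoOn g (Ici x₁))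
    (φ Φ : ℕ → ℕ)
    (hφ : ∀ n : ℕ, φ n = Set.ncard {m : ℕ | ⌊g (m : ℝ)⌋ = (n : ℤ)})
    (hΦ : ∀ n : ℕ, Φ n = ∑ k ∈ Finset.range (n + 1), φ k) :
    Tendsto φ atTop atTop ∧
      Tendsto (fun n => (φ n : ℝ) / (Φ n : ℝ)) atTop (nhds 0) := by
  classical
  obtain ⟨x₁, hsm⟩ := hsm
  obtain ⟨x₂, hx₂⟩ := eventually_atTop.1 (hinf.eventually_ge_atTop 1)
  obtain ⟨x₃, hx₃⟩ := eventually_atTop.1 (hgi.eventually_ge_atTop 1)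
  set X : ℝ := max (max (x₀ + 1) x₁) (max x₂ x₃) with hXdef
  have hXx₀ : x₀ < X :=
    lt_of_lt_of_le (by linarith) (le_trans (le_max_left _ _) (le_max_left _ _))
  have hXx₀' : x₀ ≤ X := hXx₀.le
  have hXge1 : (1:ℝ) ≤ X := le_trans (by linarith) (le_trans (le_max_left _ _) (le_max_left _ _))
  have hX0 : (0:ℝ) ≤ X := by linarith
  have hXx₁ : x₁ ≤ X := le_trans (le_max_right _ _) (le_max_left _ _)
  have hXx₂ : x₂ ≤ X := le_trans (le_max_left _ _) (le_max_right _ _)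
  have hXx₃ : x₃ ≤ X := le_trans (le_max_right _ _) (le_max_right _ _)
  -- differentiability and derivative sign facts
  have hdiffAt : ∀ x, X ≤ x → DifferentiableAt ℝ g x := by
    intro x hx
    have h1 : Ici x₀ ∈ nhds x := Ici_mem_nhds (lt_of_lt_of_le hXx₀ hx)
    exact ((hg.differentiableOn one_ne_zero) x (le_trans hXx₀' hx)).differentiableAt h1
  have hD0 : ∀ x, x₀ ≤ x → 0 ≤ deriv g x := by
    intro x hx
    exact le_of_tendsto h0 (eventually_atTop.2 ⟨x, fun y hy => hanti hx (le_trans hx hy) hy⟩)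
  have hDpos : ∀ x, X ≤ x → 0 < deriv g x := by
    intro x hx
    rcases (hD0 x (le_trans hXx₀' hx)).lt_or_eq with h | h
    · exact h
    · exfalso
      have h2 := hx₂ x (le_trans hXx₂ hx)
      rw [← h] at h2
      simp at h2
      linarith
  -- monotonicity facts
  have hmono : StrictMonoOn g (Ici X) := hsm.mono (Ici_subset_Ici.2 hXx₁)
  have hmono' : ∀ u v : ℝ, X ≤ u → u ≤ v → g u ≤ g v := fun u v hu huv =>
    huv.eq_or_lt.elim (fun h => by rw [h]) (fun h => (hmono hu (le_trans hu huv) h).le)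
  have hle' : ∀ u v : ℝ, X ≤ u → X ≤ v → g u ≤ g v → u ≤ v := by
    intro u v hu hv h
    by_contra hlt
    exact absurd h (not_le.2 (hmono hv hu (not_le.1 hlt)))
  have hlt' : ∀ u v : ℝ, X ≤ u → X ≤ v → g u < g v → u < v := by
    intro u v hu hv h
    by_contra hle
    exact absurd (hmono' v u hv (not_lt.1 hle)) (not_le.2 h)
  have hcont : ContinuousOn g (Ici X) := hg.continuousOn.mono (Ici_subset_Ici.2 hXx₀')
  have hgX1 : (1:ℝ) ≤ g X := hx₃ X hXx₃
  -- surjectivity onto [g X, ∞)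
  have hsurj : ∀ t : ℝ, g X ≤ t → ∃ p, X ≤ p ∧ g p = t := by
    intro t ht
    obtain ⟨b₀, hb₀⟩ := eventually_atTop.1 (hgi.eventually_ge_atTop t)
    have hXb : X ≤ max b₀ X := le_max_right _ _
    have h1 : t ∈ Icc (g X) (g (max b₀ X)) := ⟨ht, hb₀ _ (le_max_left _ _)⟩
    obtain ⟨p, hp, hpt⟩ :=
      intermediate_value_Icc hXb (hcont.mono Icc_subset_Ici_self) h1
    exact ⟨p, hp.1, hpt⟩
  -- the inverse sequence
  set a : ℕ → ℝ := fun n => if h : g X ≤ (n:ℝ) then (hsurj n h).choose else X with ha_def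
  have ha : ∀ n : ℕ, g X ≤ (n:ℝ) → X ≤ a n ∧ g (a n) = n := by
    intro n h
    have : a n = (hsurj n h).choose := by simp [ha_def, dif_pos h]
    rw [this]
    exact (hsurj n h).choose_spec
  have ha_ge : ∀ M : ℝ, ∃ N : ℕ, ∀ n : ℕ, N ≤ n → M ≤ a n ∧ X ≤ a n ∧ g (a n) = n := by
    intro M
    have hXM' : X ≤ max M X := le_max_right _ _
    have hgM' : g X ≤ g (max M X) := hmono' X _ le_rfl hXM'
    refine ⟨⌈g (max M X)⌉₊, fun n hn => ?_⟩
    have hn' : g (max M X) ≤ (n:ℝ) := le_trans (Nat.le_ceil _) (Nat.cast_le.2 hn)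
    obtain ⟨h1, h2⟩ := ha n (le_trans hgM' hn')
    have hM'an : max M X ≤ a n := hle' _ (a n) hXM' h1 (by rw [h2]; exact hn')
    exact ⟨le_trans (le_max_left _ _) hM'an, h1, h2⟩
  -- mean value theorem
  have hMVT : ∀ u v : ℝ, X ≤ u → u < v →
      ∃ ξ, ξ ∈ Ioo u v ∧ g v - g u = deriv g ξ * (v - u) := by
    intro u v hu huv
    have hc : ContinuousOn g (Icc u v) := hcont.mono (fun x hx => le_trans hu hx.1)
    have hd : DifferentiableOn ℝ g (Ioo u v) := fun x hx =>
      (hdiffAt x (le_trans hu hx.1.le)).differentiableWithinAt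
    obtain ⟨c, hc1, hc2⟩ := exists_deriv_eq_slope g huv hc hd
    refine ⟨c, hc1, ?_⟩
    rw [hc2, div_mul_cancel₀ _ (sub_ne_zero.2 huv.ne')]
  -- finiteness of the level sets
  have hfin : ∀ n : ℕ, {m : ℕ | ⌊g (m:ℝ)⌋ = (n:ℤ)}.Finite := by
    intro n
    obtain ⟨N, hN⟩ := eventually_atTop.1
      ((hgi.comp tendsto_natCast_atTop_atTop).eventually_gt_atTop ((n:ℝ) + 1))
    refine Set.Finite.subset (Set.finite_Iio N) ?_
    intro m hm
    simp only [Set.mem_setOf_eq] at hm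
    by_contra hcon
    have h1 : (n:ℝ) + 1 < g m := by
      have := hN m (not_lt.1 (by simpa using hcon))
      simpa [Function.comp] using this
    have h2 := (Int.floor_eq_iff.1 hm).2
    push_cast at h2
    linarith
  constructor
  · -- φ → ∞
    rw [tendsto_atTop]
    intro K
    have hδ : (0:ℝ) < 1/(K+2) := by positivity
    obtain ⟨M₀, hM₀⟩ := eventually_atTop.1 ((tendsto_order.1 h0).2 _ hδ)
    obtain ⟨N₁, hN₁⟩ := ha_ge (max M₀ X)
    rw [eventually_atTop]
    refine ⟨N₁, fun n hn => ?_⟩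
    obtain ⟨hMan, hXan, hgan⟩ := hN₁ n hn
    have hF : ((Finset.Ico ⌈a n⌉₊ (⌈a n⌉₊ + K) : Finset ℕ) : Set ℕ) ⊆
        {m : ℕ | ⌊g (m:ℝ)⌋ = (n:ℤ)} := by
      intro m hm
      simp only [Finset.coe_Ico, Set.mem_Ico] at hm
      have h1 : a n ≤ (m:ℝ) := le_trans (Nat.le_ceil _) (Nat.cast_le.2 hm.1)
      have hcm : (m:ℝ) < (⌈a n⌉₊ : ℝ) + K := by exact_mod_cast hm.2
      have hcl : (⌈a n⌉₊:ℝ) < a n + 1 := Nat.ceil_lt_add_one (le_trans hX0 hXan)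
      have h2 : (m:ℝ) < a n + 1 + K := by linarith
      have hup : g m < (n:ℝ) + 1 := by
        rcases h1.lt_or_eq with hlt | heq
        · obtain ⟨ξ, hξ, hslope⟩ := hMVT (a n) m hXan hlt
          have hξM : M₀ ≤ ξ := le_trans (le_trans (le_max_left _ _) hMan) hξ.1.le
          have hd1 : deriv g ξ < 1/(K+2) := hM₀ ξ hξM
          have hd0 : 0 ≤ deriv g ξ :=
            hD0 ξ (le_trans hXx₀' (le_trans hXan hξ.1.le))
          have hbound : deriv g ξ * ((m:ℝ) - a n) ≤ (1/((K:ℝ)+2)) * (K+1) :=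
            mul_le_mul hd1.le (by linarith) (by linarith) hδ.le
          have hlt1 : (1:ℝ)/((K:ℝ)+2) * (K+1) < 1 := by
            rw [div_mul_eq_mul_div, one_mul, div_lt_one (by positivity)]
            linarith
          linarith [hslope, hgan]
        · rw [← heq, hgan]; linarith
      have hlow : (n:ℝ) ≤ g m := by
        rw [← hgan]; exact hmono' (a n) m hXan h1
      rw [Set.mem_setOf_eq, Int.floor_eq_iff]
      exact ⟨by exact_mod_cast hlow, by push_cast; exact hup⟩
    calc K = (Finset.Ico ⌈a n⌉₊ (⌈a n⌉₊ + K)).card := by simp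
      _ = ((Finset.Ico ⌈a n⌉₊ (⌈a n⌉₊ + K) : Finset ℕ) : Set ℕ).ncard :=
          (Set.ncard_coe_finset _).symm
      _ ≤ Set.ncard {m : ℕ | ⌊g (m:ℝ)⌋ = (n:ℤ)} := Set.ncard_le_ncard hF (hfin n)
      _ = φ n := (hφ n).symm
  · -- φ/Φ → 0
    rw [Metric.tendsto_nhds]
    intro ε hε
    set C : ℝ := ∑ m ∈ Finset.range ⌈X⌉₊, |g (m:ℝ)| with hCdef
    have hC : ∀ m : ℕ, (m:ℝ) < X → g m ≤ C := by
      intro m hm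
      have hm' : m ∈ Finset.range ⌈X⌉₊ := Finset.mem_range.2 (Nat.lt_ceil.2 hm)
      calc g m ≤ |g m| := le_abs_self _
        _ ≤ C := Finset.single_le_sum (f := fun i : ℕ => |g (i:ℝ)|) (fun i _ => abs_nonneg _) hm'
    obtain ⟨R, hR⟩ := eventually_atTop.1 (hinf.eventually_ge_atTop (8/ε))
    obtain ⟨N₂, hN₂⟩ := ha_ge (max (max R (8/ε)) (2*X + 2))
    obtain ⟨N₃, hN₃⟩ := ha_ge X
    obtain ⟨N₄, hN₄⟩ := eventually_atTop.1
      ((tendsto_natCast_atTop_atTop (R := ℝ)).eventually_gt_atTop C)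
    rw [eventually_atTop]
    refine ⟨max (max N₂ N₃) N₄, fun n hn => ?_⟩
    have hnN₂ : N₂ ≤ n + 1 :=
      le_trans (le_trans (le_max_left _ _) (le_max_left _ _)) (le_trans hn (Nat.le_succ n))
    have hnN₃ : N₃ ≤ n := le_trans (le_trans (le_max_right _ _) (le_max_left _ _)) hn
    have hnN₄ : N₄ ≤ n := le_trans (le_max_right _ _) hn
    obtain ⟨hbig, hXb, hgb⟩ := hN₂ (n+1) hnN₂
    obtain ⟨_, hXα, hgα⟩ := hN₃ n hnN₃
    have hCn : C < (n:ℝ) := hN₄ n hnN₄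
    set α := a n
    set b := a (n+1) with hbdef
    have hgb' : g b = (n:ℝ) + 1 := by rw [hgb]; push_cast; ring
    have hbR : R ≤ b := le_trans (le_trans (le_max_left _ _) (le_max_left _ _)) hbig
    have hbε : 8/ε ≤ b := le_trans (le_trans (le_max_right _ _) (le_max_left _ _)) hbig
    have hb2X : 2*X + 2 ≤ b := le_trans (le_max_right _ _) hbig
    have hb0 : (0:ℝ) < b := by linarith
    have hαb : α < b := hlt' α b hXα hXb (by rw [hgα, hgb']; linarith)
    have hg'b : 0 < deriv g b := hDpos b hXb
    have hbg' : 8/ε ≤ b * deriv g b := by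
      have := hR b hbR
      rwa [abs_of_nonneg (hD0 b (le_trans hXx₀' hXb))] at this
    -- gap bound via MVT
    obtain ⟨ξ, hξ, hslope⟩ := hMVT α b hXα hαb
    have hgap : deriv g ξ * (b - α) = 1 := by
      rw [← hslope, hgα, hgb']; ring
    have hξb : deriv g b ≤ deriv g ξ :=
      hanti (le_trans hXx₀' (le_trans hXα hξ.1.le)) (le_trans hXx₀' hXb) hξ.2.le
    have hgapb : b - α ≤ 1 / deriv g b := by
      rw [le_div_iff₀ hg'b]
      nlinarith [mul_le_mul_of_nonneg_right hξb (by linarith : (0:ℝ) ≤ b - α)]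
    -- upper bound on φ n
    have hφsub : {m : ℕ | ⌊g (m:ℝ)⌋ = (n:ℤ)} ⊆
        ((Finset.Ico ⌈α⌉₊ ⌈b⌉₊ : Finset ℕ) : Set ℕ) := by
      intro m hm
      rw [Set.mem_setOf_eq, Int.floor_eq_iff] at hm
      have hm1 : (n:ℝ) ≤ g m := by exact_mod_cast hm.1
      have hm2 : g m < (n:ℝ) + 1 := by
        have := hm.2; push_cast at this; exact this
      have hXm : X ≤ (m:ℝ) := by
        by_contra hcon
        have := hC m (not_le.1 hcon)
        linarith
      have hαm : α ≤ (m:ℝ) := hle' α m hXα hXm (by rw [hgα]; exact hm1)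
      have hmb : (m:ℝ) < b := hlt' m b hXm hXb (by rw [hgb']; exact hm2)
      simp only [Finset.coe_Ico, Set.mem_Ico]
      exact ⟨Nat.ceil_le.2 hαm, Nat.lt_ceil.2 hmb⟩
    have hceil : ⌈α⌉₊ ≤ ⌈b⌉₊ := Nat.ceil_le_ceil hαb.le
    have hφle : (φ n : ℝ) ≤ 1 / deriv g b + 1 := by
      have hcard : φ n ≤ (Finset.Ico ⌈α⌉₊ ⌈b⌉₊).card := by
        rw [hφ n, ← Set.ncard_coe_finset]
        exact Set.ncard_le_ncard hφsub (Finset.finite_toSet _)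
      have hcards : (Finset.Ico ⌈α⌉₊ ⌈b⌉₊).card = ⌈b⌉₊ - ⌈α⌉₊ := Nat.card_Ico _ _
      have h1 : (φ n : ℝ) ≤ (⌈b⌉₊:ℝ) - (⌈α⌉₊:ℝ) := by
        rw [hcards] at hcard
        have := (Nat.cast_le (α := ℝ)).2 hcard
        rwa [Nat.cast_sub hceil] at this
      have h2 : (⌈b⌉₊:ℝ) < b + 1 := Nat.ceil_lt_add_one (le_trans hX0 hXb)
      have h3 : α ≤ (⌈α⌉₊:ℝ) := Nat.le_ceil _
      linarith
    -- lower bound on Φ n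
    have hTflr : ∀ m ∈ Finset.Ico ⌈X⌉₊ ⌈b⌉₊, 0 ≤ ⌊g (m:ℝ)⌋ ∧ ⌊g (m:ℝ)⌋ ≤ (n:ℤ) := by
      intro m hm
      rw [Finset.mem_Ico] at hm
      have hXm : X ≤ (m:ℝ) := Nat.ceil_le.1 hm.1
      have hmb : (m:ℝ) < b := Nat.lt_ceil.1 hm.2
      have h1 : (1:ℝ) ≤ g m := le_trans hgX1 (hmono' X m le_rfl hXm)
      have h2 : g m < (n:ℝ) + 1 := by
        have := hmono hXm hXb hmb
        rw [hgb'] at this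
        exact this
      constructor
      · exact Int.le_floor.2 (by exact_mod_cast (by linarith : (0:ℝ) ≤ g m))
      · have : ⌊g (m:ℝ)⌋ < (n:ℤ) + 1 := Int.floor_lt.2 (by push_cast; exact h2)
        omega
    have hTmem : ∀ m ∈ Finset.Ico ⌈X⌉₊ ⌈b⌉₊, (⌊g (m:ℝ)⌋).toNat ∈ Finset.range (n+1) := by
      intro m hm
      obtain ⟨h1, h2⟩ := hTflr m hm
      rw [Finset.mem_range]
      omega
    have hTcard : (Finset.Ico ⌈X⌉₊ ⌈b⌉₊).card ≤ Φ n := by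
      rw [hΦ n, Finset.card_eq_sum_card_fiberwise hTmem]
      refine Finset.sum_le_sum ?_
      intro k _
      rw [hφ k, ← Set.ncard_coe_finset]
      refine Set.ncard_le_ncard ?_ (hfin k)
      intro m hm
      simp only [Finset.coe_filter, Set.mem_setOf_eq] at hm ⊢
      obtain ⟨hmT, hmk⟩ := hm
      obtain ⟨h1, _⟩ := hTflr m hmT
      omega
    have hceilX : ⌈X⌉₊ ≤ ⌈b⌉₊ := Nat.ceil_le_ceil hXb
    have hΦge : b - X - 1 ≤ (Φ n : ℝ) := by
      have h1 : ((Finset.Ico ⌈X⌉₊ ⌈b⌉₊).card : ℝ) ≤ (Φ n : ℝ) := Nat.cast_le.2 hTcard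
      rw [Nat.card_Ico, Nat.cast_sub hceilX] at h1
      have h2 : b ≤ (⌈b⌉₊:ℝ) := Nat.le_ceil _
      have h3 : (⌈X⌉₊:ℝ) < X + 1 := Nat.ceil_lt_add_one hX0
      linarith
    -- conclude
    have hΦpos : (0:ℝ) < (Φ n : ℝ) := by linarith
    have h1 : 1/deriv g b ≤ ε/8 * b := by
      rw [div_le_iff₀ hg'b]
      have h8 : (8:ℝ)/ε * (ε/8) = 1 := by field_simp
      nlinarith [mul_le_mul_of_nonneg_right hbg' (by positivity : (0:ℝ) ≤ ε/8)]
    have hεb : 8 ≤ ε * b := by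
      have := (div_le_iff₀ hε).1 hbε
      linarith
    have hΦhalf : b/2 ≤ (Φ n:ℝ) := by linarith
    have h2 : (φ n : ℝ) ≤ ε * b / 4 := by linarith
    have h3 : ε * (b/2) ≤ ε * (Φ n:ℝ) := mul_le_mul_of_nonneg_left hΦhalf hε.le
    have hnum : (φ n : ℝ) < ε * (Φ n:ℝ) := by linarith
    have hratio : (φ n : ℝ) / (Φ n:ℝ) < ε := (div_lt_iff₀ hΦpos).2 hnum
    simp only [dist_zero_right, Real.norm_eq_abs]
    rw [abs_of_nonneg (div_nonneg (Nat.cast_nonneg _) (Nat.cast_nonneg _))]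
    exact hratio
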